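/- Let a ∈ ℝ with a ≠ 0 and a ≠ 1, and set A = {0, 1, a}. Then A is spectral if and only if a is rational and, writing a = p/q in reduced form (p ∈ ℤ, q ∈ ℕ, q ≥ 1, gcd(|p|, q) = 1), one has p + q ≡ 0 (mod 3). -/

import Mathlib

open MeasureTheory Real

/-- The uniform atomic probability measure `μ_A = (1/|A|) ∑_{a ∈ A} δ_a` on a finite set
`A ⊂ ℝ`. -/
noncomputable def unifMeasure (A : Finset ℝ) : Measure ℝ :=
  (A.card : ENNReal)⁻¹ • ∑ a ∈ A, Measure.dirac a

/-- A finite set `A ⊂ ℝ` is spectral if there is a set `Λ ⊆ ℝ` such that the exponentials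
`{e_λ : λ ∈ Λ}`, `e_λ(x) = e^{2πiλx}`, form an orthonormal basis of `L²(μ_A)`. -/
def IsSpectralFinset (A : Finset ℝ) : Prop :=
  ∃ Λ : Set ℝ, ∃ b : HilbertBasis Λ ℂ (Lp ℂ 2 (unifMeasure A)),
    ∀ l : Λ, (b l : ℝ → ℂ) =ᵐ[unifMeasure A]
      fun x => Complex.exp (2 * π * Complex.I * (l : ℝ) * x)

namespace SpecAux

/-! ### cube root of unity facts -/

noncomputable def om : ℂ := Complex.exp (2 * π * Complex.I / 3)

lemma om_pow_three : om ^ 3 = 1 := by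
  rw [om, ← Complex.exp_nat_mul]
  rw [show ((3:ℕ):ℂ) * (2 * π * Complex.I / 3) = 2 * π * Complex.I by push_cast; ring]
  exact Complex.exp_two_pi_mul_I

lemma om_re : om.re = -(1/2) := by
  rw [om, show (2 * ↑π * Complex.I / 3 : ℂ) = ((2 * π / 3 : ℝ) : ℂ) * Complex.I by push_cast; ring,
    Complex.exp_ofReal_mul_I_re]
  rw [show (2 * π / 3 : ℝ) = π - π/3 by ring, Real.cos_pi_sub, Real.cos_pi_div_three]

lemma om_im : om.im = Real.sqrt 3 / 2 := by
  rw [om, show (2 * ↑π * Complex.I / 3 : ℂ) = ((2 * π / 3 : ℝ) : ℂ) * Complex.I by push_cast; ring,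
    Complex.exp_ofReal_mul_I_im]
  rw [show (2 * π / 3 : ℝ) = π - π/3 by ring, Real.sin_pi_sub, Real.sin_pi_div_three]

lemma om_ne_one : om ≠ 1 := by
  intro h
  have h1 := om_im
  rw [h] at h1
  have h2 : (0:ℝ) < Real.sqrt 3 := Real.sqrt_pos.2 (by norm_num)
  simp at h1
  linarith

lemma om_sum : 1 + om + om ^ 2 = 0 := by
  have h : (om - 1) * (1 + om + om ^ 2) = om ^ 3 - 1 := by ring
  rw [om_pow_three, sub_self] at h
  rcases mul_eq_zero.1 h with h' | h'
  · exact absurd (sub_eq_zero.1 h') om_ne_one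
  · exact h'

lemma om_ne_zero : om ≠ 0 := Complex.exp_ne_zero _

lemma om_conj : (starRingEnd ℂ) om = om ^ 2 := by
  rw [om, ← Complex.exp_conj]
  have h : (starRingEnd ℂ) (2 * ↑π * Complex.I / 3) = -(2 * ↑π * Complex.I / 3) := by
    rw [show (2*↑π*Complex.I/3 : ℂ) = ((2*π/3:ℝ):ℂ)*Complex.I by push_cast; ring]
    rw [map_mul, Complex.conj_ofReal, Complex.conj_I]
    push_cast; ring
  rw [h, ← Complex.exp_nat_mul]
  rw [show ((2:ℕ):ℂ) * (2 * ↑π * Complex.I / 3) = -(2 * ↑π * Complex.I / 3) + 2 * ↑π * Complex.I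
    by push_cast; ring, Complex.exp_add, Complex.exp_two_pi_mul_I, mul_one]

lemma om_zpow_eq (m : ℤ) : om ^ m = om ^ (m % 3) := by
  conv_lhs => rw [← Int.emod_add_mul_ediv m 3]
  rw [zpow_add₀ om_ne_zero, zpow_mul]
  rw [show ((3:ℤ) = ((3:ℕ):ℤ)) from rfl, zpow_natCast, om_pow_three, one_zpow, mul_one]

lemma om_inv : om⁻¹ = om ^ 2 :=
  inv_eq_of_mul_eq_one_right (by rw [show om * om ^ 2 = om ^ 3 by ring, om_pow_three])

lemma two_pi_I_ne : (2 * ↑π * Complex.I : ℂ) ≠ 0 := by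
  simp [Complex.I_ne_zero, Real.pi_ne_zero]

lemma cube_roots {z w : ℂ} (hz : ‖z‖ = 1) (hw : ‖w‖ = 1)
    (h : 1 + z + w = 0) : (z = om ∧ w = om ^ 2) ∨ (z = om ^ 2 ∧ w = om) := by
  have hw' : w = -1 - z := by linear_combination h
  have hnz : Complex.normSq z = 1 := by rw [← Complex.sq_norm, hz]; norm_num
  have hnw : Complex.normSq w = 1 := by rw [← Complex.sq_norm, hw]; norm_num
  rw [hw'] at hnw
  have hre : z.re = -(1/2) := by
    have e1 : Complex.normSq (-1 - z) = 1 + 2 * z.re + Complex.normSq z := by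
      simp [Complex.normSq_apply]; ring
    rw [e1, hnz] at hnw; linarith
  have hs3 : Real.sqrt 3 ^ 2 = 3 := Real.sq_sqrt (by norm_num)
  have e2 : z.im ^ 2 = 3 / 4 := by
    have h5 := hnz
    rw [Complex.normSq_apply, hre] at h5
    nlinarith
  have him : z.im = Real.sqrt 3 / 2 ∨ z.im = -(Real.sqrt 3 / 2) := by
    have h2 : (z.im - Real.sqrt 3 / 2) * (z.im + Real.sqrt 3 / 2) = 0 := by
      linear_combination e2 - hs3/4
    rcases mul_eq_zero.1 h2 with h' | h'
    · left; linarith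
    · right; linarith
  have hom2re : (om ^ 2).re = -(1/2) := by
    rw [← om_conj, Complex.conj_re, om_re]
  have hom2im : (om ^ 2).im = -(Real.sqrt 3 / 2) := by
    rw [← om_conj, Complex.conj_im, om_im]
  rcases him with h' | h'
  · left
    have hz' : z = om := Complex.ext (by rw [hre, om_re]) (by rw [h', om_im])
    exact ⟨hz', by rw [hw', hz']; linear_combination -om_sum⟩
  · right
    have hz' : z = om ^ 2 := Complex.ext (by rw [hre, hom2re]) (by rw [h', hom2im])
    exact ⟨hz', by rw [hw', hz']; linear_combination -om_sum⟩

lemma exp_eq_om {θ : ℝ} (h : Complex.exp (2 * π * Complex.I * θ) = om) :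
    ∃ n : ℤ, θ = 1/3 + n := by
  rw [om] at h
  obtain ⟨n, hn⟩ := Complex.exp_eq_exp_iff_exists_int.1 h
  refine ⟨n, ?_⟩
  have h1 : (θ : ℂ) = ((1/3 + n : ℝ) : ℂ) := by
    apply mul_left_cancel₀ two_pi_I_ne
    rw [hn]; push_cast; ring
  exact Complex.ofReal_inj.1 h1

lemma exp_eq_om2 {θ : ℝ} (h : Complex.exp (2 * π * Complex.I * θ) = om ^ 2) :
    ∃ n : ℤ, θ = 2/3 + n := by
  have hom2 : om ^ 2 = Complex.exp (((2:ℕ):ℂ) * (2 * π * Complex.I / 3)) := by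
    rw [om, ← Complex.exp_nat_mul]
  rw [hom2] at h
  obtain ⟨n, hn⟩ := Complex.exp_eq_exp_iff_exists_int.1 h
  refine ⟨n, ?_⟩
  have h1 : (θ : ℂ) = ((2/3 + n : ℝ) : ℂ) := by
    apply mul_left_cancel₀ two_pi_I_ne
    rw [hn]; push_cast; ring
  exact Complex.ofReal_inj.1 h1

lemma exp_unit (θ : ℝ) : ‖Complex.exp (2 * π * Complex.I * θ)‖ = 1 := by
  rw [Complex.norm_exp]
  have h : (2 * ↑π * Complex.I * ↑θ : ℂ).re = 0 := by simp
  rw [h, Real.exp_zero]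

lemma conj_exp_mul (l l' x : ℝ) :
    (starRingEnd ℂ) (Complex.exp (2 * π * Complex.I * l * x)) *
      Complex.exp (2 * π * Complex.I * l' * x) =
    Complex.exp (2 * π * Complex.I * ((l' - l) * x)) := by
  rw [← Complex.exp_conj]
  rw [show (2*↑π*Complex.I*↑l*↑x : ℂ) = ((2*π*l*x:ℝ):ℂ)*Complex.I by push_cast; ring]
  rw [map_mul, Complex.conj_ofReal, Complex.conj_I, ← Complex.exp_add]
  congr 1
  push_cast; ring

/-! ### the measure -/

lemma integrable_dirac_any (f : ℝ → ℂ) (x : ℝ) : Integrable f (Measure.dirac x) := by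
  have h : f =ᵐ[Measure.dirac x] fun _ => f x := by
    rw [ae_dirac_eq]; exact Filter.eventually_pure.2 rfl
  exact (integrable_const (f x)).congr h.symm

variable {a : ℝ}

lemma mu_eq (ha0 : a ≠ 0) (ha1 : a ≠ 1) : unifMeasure ({0,1,a} : Finset ℝ) =
    (3 : ENNReal)⁻¹ • (Measure.dirac 0 + Measure.dirac 1 + Measure.dirac a) := by
  have h1 : (1:ℝ) ∉ ({a} : Finset ℝ) := by simp [Ne.symm ha1]
  have h0 : (0:ℝ) ∉ ({1,a} : Finset ℝ) := by simp [Ne.symm ha0]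
  rw [unifMeasure, Finset.card_insert_of_notMem h0, Finset.card_insert_of_notMem h1,
    Finset.sum_insert h0, Finset.sum_insert h1]
  simp [add_assoc]

lemma ae_iff_mu (ha0 : a ≠ 0) (ha1 : a ≠ 1) {p : ℝ → Prop} :
    (∀ᵐ x ∂(unifMeasure ({0,1,a} : Finset ℝ)), p x) ↔ p 0 ∧ p 1 ∧ p a := by
  rw [mu_eq ha0 ha1, Measure.ae_ennreal_smul_measure_iff (by norm_num), ae_add_measure_iff,
    ae_add_measure_iff, ae_dirac_eq, ae_dirac_eq, ae_dirac_eq]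
  simp [and_assoc]

lemma integral_mu (ha0 : a ≠ 0) (ha1 : a ≠ 1) (f : ℝ → ℂ) :
    ∫ x, f x ∂(unifMeasure ({0,1,a} : Finset ℝ)) = (f 0 + f 1 + f a) / 3 := by
  rw [mu_eq ha0 ha1, integral_smul_measure,
    integral_add_measure ((integrable_dirac_any f 0).add_measure (integrable_dirac_any f 1))
      (integrable_dirac_any f a),
    integral_add_measure (integrable_dirac_any f 0) (integrable_dirac_any f 1),
    integral_dirac, integral_dirac, integral_dirac]
  have h : ((3 : ENNReal)⁻¹).toReal = 1/3 := by simp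
  rw [h]
  ring_nf
  rw [Complex.real_smul]
  push_cast
  ring

lemma isProb (ha0 : a ≠ 0) (ha1 : a ≠ 1) :
    IsProbabilityMeasure (unifMeasure ({0,1,a} : Finset ℝ)) := by
  constructor
  rw [mu_eq ha0 ha1]
  simp [Measure.add_apply]
  have h : (3:ENNReal)⁻¹ + 3⁻¹ + 3⁻¹ = 3 * 3⁻¹ := by ring
  rw [h, ENNReal.mul_inv_cancel] <;> norm_num

/-! ### L² structure -/

lemma memLp_exp (ha0 : a ≠ 0) (ha1 : a ≠ 1) (l : ℝ) :
    MemLp (fun x : ℝ => Complex.exp (2 * π * Complex.I * l * x)) 2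
      (unifMeasure ({0,1,a} : Finset ℝ)) := by
  haveI := isProb ha0 ha1
  refine MemLp.of_bound ?_ 1 ?_
  · exact (Complex.continuous_exp.comp (by continuity)).aestronglyMeasurable
  · refine Filter.Eventually.of_forall fun x => ?_
    rw [Complex.norm_exp]
    have h : (2 * ↑π * Complex.I * ↑l * ↑x).re = 0 := by simp
    rw [h, Real.exp_zero]

lemma memLp_ind (ha0 : a ≠ 0) (ha1 : a ≠ 1) (pt : ℝ) (c : ℂ) :
    MemLp (Set.indicator {pt} (fun _ => c)) 2 (unifMeasure ({0,1,a} : Finset ℝ)) := by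
  haveI := isProb ha0 ha1
  refine MemLp.of_bound ?_ ‖c‖ ?_
  · exact (stronglyMeasurable_const.indicator (measurableSet_singleton pt)).aestronglyMeasurable
  · refine Filter.Eventually.of_forall fun x => ?_
    by_cases h : x ∈ ({pt} : Set ℝ) <;> simp [Set.indicator_apply, h]

lemma inner_Lp (ha0 : a ≠ 0) (ha1 : a ≠ 1) (F G : Lp ℂ 2 (unifMeasure ({0,1,a} : Finset ℝ))) :
    (inner ℂ F G : ℂ) =
      ((starRingEnd ℂ) (F 0) * G 0 + (starRingEnd ℂ) (F 1) * G 1 +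
        (starRingEnd ℂ) (F a) * G a) / 3 := by
  rw [MeasureTheory.L2.inner_def]
  rw [show (fun x => (inner ℂ (F x) (G x) : ℂ)) = fun x => (starRingEnd ℂ) (F x) * G x from funext fun x => RCLike.inner_apply' _ _]
  exact integral_mu ha0 ha1 _

lemma eq_Lp_iff (ha0 : a ≠ 0) (ha1 : a ≠ 1)
    (F G : Lp ℂ 2 (unifMeasure ({0,1,a} : Finset ℝ))) :
    F = G ↔ (F 0 = G 0 ∧ F 1 = G 1 ∧ F a = G a) := by
  constructor
  · rintro rfl; exact ⟨rfl, rfl, rfl⟩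
  · intro h
    exact MeasureTheory.Lp.ext ((ae_iff_mu ha0 ha1).2 h)

lemma toLp_vals (ha0 : a ≠ 0) (ha1 : a ≠ 1) {f : ℝ → ℂ}
    (hf : MemLp f 2 (unifMeasure ({0,1,a} : Finset ℝ))) :
    (hf.toLp f) 0 = f 0 ∧ (hf.toLp f) 1 = f 1 ∧ (hf.toLp f) a = f a :=
  (ae_iff_mu ha0 ha1).1 hf.coeFn_toLp

lemma inner_toLp_exp (ha0 : a ≠ 0) (ha1 : a ≠ 1) (l l' : ℝ) :
    (inner ℂ ((memLp_exp ha0 ha1 l).toLp _) ((memLp_exp ha0 ha1 l').toLp _) : ℂ) =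
      (1 + Complex.exp (2 * π * Complex.I * (l' - l)) +
        Complex.exp (2 * π * Complex.I * ((l' - l) * a))) / 3 := by
  rw [inner_Lp ha0 ha1]
  obtain ⟨h0, h1, h2⟩ := toLp_vals ha0 ha1 (memLp_exp ha0 ha1 l)
  obtain ⟨g0, g1, g2⟩ := toLp_vals ha0 ha1 (memLp_exp ha0 ha1 l')
  rw [h0, h1, h2, g0, g1, g2, conj_exp_mul, conj_exp_mul, conj_exp_mul]
  have e0 : (2 * ↑π * Complex.I * ((↑l' - ↑l) * ((0:ℝ):ℂ)) : ℂ) = 0 := by push_cast; ring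
  have e1 : (2 * ↑π * Complex.I * ((↑l' - ↑l) * ((1:ℝ):ℂ)) : ℂ)
      = 2 * ↑π * Complex.I * (↑l' - ↑l) := by push_cast; ring
  rw [e0, e1, Complex.exp_zero]

lemma exists_pq {r s : ℤ} (hs : s ≠ 0) (haeq : a = (r:ℝ)/(s:ℝ))
    (hrs : (r : ZMod 3) = 2 * (s : ZMod 3)) (hs3 : (s : ZMod 3) ≠ 0) :
    ∃ (p : ℤ) (q : ℕ), 1 ≤ q ∧ Nat.Coprime p.natAbs q ∧ a = (p : ℝ) / (q : ℝ) ∧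
      (3 : ℤ) ∣ p + (q : ℤ) := by
  set x : ℚ := (r : ℚ) / (s : ℚ) with hx
  refine ⟨x.num, x.den, x.pos, x.reduced, ?_, ?_⟩
  · rw [haeq, show ((x.num : ℝ)) / (x.den : ℝ) = ((x : ℚ) : ℝ) by rw [Rat.cast_def], hx]
    push_cast
    ring
  · have key : x.num * s = r * (x.den : ℤ) := by
      have h1 : (x.num : ℚ) / (x.den : ℚ) = (r : ℚ) / (s : ℚ) := by
        rw [Rat.num_div_den, hx]
      have hden : ((x.den : ℚ)) ≠ 0 := by exact_mod_cast x.den_nz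
      have hs' : ((s : ℚ)) ≠ 0 := by exact_mod_cast hs
      have h2 := (div_eq_div_iff hden hs').1 h1
      exact_mod_cast h2
    have h4 : ((x.num + (x.den:ℤ) : ℤ) : ZMod 3) = 0 := by
      have k2 : (x.num : ZMod 3) * (s : ZMod 3) = (r : ZMod 3) * ((x.den : ℤ) : ZMod 3) := by
        exact_mod_cast congrArg (Int.cast : ℤ → ZMod 3) key
      rw [hrs] at k2
      have hp : (x.num : ZMod 3) = 2 * ((x.den : ℤ) : ZMod 3) := by
        apply mul_right_cancel₀ hs3
        rw [k2]; ring
      push_cast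
      push_cast at hp
      rw [hp]
      have h3 : (3 : ZMod 3) = 0 := by decide
      linear_combination (x.den : ZMod 3) * h3
    have h5 := (ZMod.intCast_zmod_eq_zero_iff_dvd (x.num + (x.den:ℤ)) 3).1 h4
    exact_mod_cast h5

lemma forward (ha0 : a ≠ 0) (ha1 : a ≠ 1) (h : IsSpectralFinset ({0, 1, a} : Finset ℝ)) :
    ∃ (p : ℤ) (q : ℕ), 1 ≤ q ∧ Nat.Coprime p.natAbs q ∧ a = (p : ℝ) / (q : ℝ) ∧
      (3 : ℤ) ∣ p + (q : ℤ) := by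
  classical
  obtain ⟨Λ, b, hb⟩ := h
  have hbe : ∀ l : Λ, (b l : Lp ℂ 2 (unifMeasure ({0,1,a} : Finset ℝ)))
      = (memLp_exp ha0 ha1 (l:ℝ)).toLp _ :=
    fun l => MeasureTheory.Lp.ext ((hb l).trans (memLp_exp ha0 ha1 (l:ℝ)).coeFn_toLp.symm)
  -- two auxiliary orthonormal vectors
  set c : ℂ := ((Real.sqrt 3 : ℝ) : ℂ) with hc
  set g₀ := (memLp_ind ha0 ha1 0 c).toLp _ with hg₀
  set g₁ := (memLp_ind ha0 ha1 1 c).toLp _ with hg₁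
  obtain ⟨v00, v01, v0a⟩ := toLp_vals ha0 ha1 (memLp_ind ha0 ha1 0 c)
  obtain ⟨v10, v11, v1a⟩ := toLp_vals ha0 ha1 (memLp_ind ha0 ha1 1 c)
  have i00 : Set.indicator ({(0:ℝ)} : Set ℝ) (fun _ => c) 0 = c := by simp
  have i01 : Set.indicator ({(0:ℝ)} : Set ℝ) (fun _ => c) 1 = 0 := by
    simp [Set.indicator_apply]
  have i0a : Set.indicator ({(0:ℝ)} : Set ℝ) (fun _ => c) a = 0 := by
    simp [Set.indicator_apply, ha0]
  have i10 : Set.indicator ({(1:ℝ)} : Set ℝ) (fun _ => c) 0 = 0 := by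
    simp [Set.indicator_apply]
  have i11 : Set.indicator ({(1:ℝ)} : Set ℝ) (fun _ => c) 1 = c := by simp
  have i1a : Set.indicator ({(1:ℝ)} : Set ℝ) (fun _ => c) a = 0 := by
    simp [Set.indicator_apply, ha1]
  have hcc : (starRingEnd ℂ) c * c = 3 := by
    rw [hc, Complex.conj_ofReal, ← Complex.ofReal_mul, Real.mul_self_sqrt (by norm_num)]
    norm_num
  have hg00 : (inner ℂ g₀ g₀ : ℂ) = 1 := by
    rw [hg₀, inner_Lp ha0 ha1, v00, v01, v0a, i00, i01, i0a, hcc]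
    simp
  have hg11 : (inner ℂ g₁ g₁ : ℂ) = 1 := by
    rw [hg₁, inner_Lp ha0 ha1, v10, v11, v1a, i10, i11, i1a, hcc]
    simp
  have hg01 : (inner ℂ g₀ g₁ : ℂ) = 0 := by
    rw [hg₀, hg₁, inner_Lp ha0 ha1, v00, v01, v0a, v10, v11, v1a, i00, i01, i0a, i10, i11, i1a]
    simp
  -- Λ has two distinct elements
  have hex : ∃ l l' : Λ, l ≠ l' := by
    by_contra hcon
    push_neg at hcon
    have hP := b.tsum_inner_mul_inner g₀ g₀
    rw [hg00] at hP
    rcases isEmpty_or_nonempty Λ with he | hne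
    · rw [tsum_empty] at hP
      exact zero_ne_one hP
    · obtain ⟨l0⟩ := hne
      have hQ := b.tsum_inner_mul_inner g₁ g₁
      have hR := b.tsum_inner_mul_inner g₀ g₁
      rw [hg11] at hQ
      rw [hg01] at hR
      rw [tsum_eq_single l0 (fun l hl => absurd (hcon l l0) hl)] at hP hQ hR
      rcases mul_eq_zero.1 hR with h' | h'
      · rw [h', zero_mul] at hP; exact zero_ne_one hP
      · rw [h', mul_zero] at hQ; exact zero_ne_one hQ
  obtain ⟨l, l', hll⟩ := hex
  have horth : (inner ℂ (b l) (b l') : ℂ) = 0 := b.orthonormal.2 hll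
  rw [hbe l, hbe l', inner_toLp_exp ha0 ha1] at horth
  rw [show ((2:ℂ) * ↑π * Complex.I * (↑(l':ℝ) - ↑(l:ℝ)))
      = 2 * ↑π * Complex.I * ((((l':ℝ) - (l:ℝ) : ℝ)):ℂ) by push_cast; ring,
    show ((2:ℂ) * ↑π * Complex.I * ((↑(l':ℝ) - ↑(l:ℝ)) * ↑a))
      = 2 * ↑π * Complex.I * (((((l':ℝ) - (l:ℝ)) * a : ℝ)):ℂ) by push_cast; ring] at horth
  set θ : ℝ := (l':ℝ) - (l:ℝ) with hθ
  have hz : 1 + Complex.exp (2 * π * Complex.I * θ)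
      + Complex.exp (2 * π * Complex.I * ((θ * a : ℝ))) = 0 := by
    rcases div_eq_zero_iff.1 horth with h' | h'
    · exact h'
    · norm_num at h'
  rcases cube_roots (exp_unit θ) (exp_unit (θ * a)) hz with ⟨hz1, hw1⟩ | ⟨hz1, hw1⟩
  · obtain ⟨n, hn⟩ := exp_eq_om hz1
    obtain ⟨m, hm⟩ := exp_eq_om2 hw1
    have hsZ : (3*n+1 : ℤ) ≠ 0 := by omega
    have hden : ((3*n+1 : ℤ) : ℝ) ≠ 0 := by exact_mod_cast hsZ
    have haeq : a = ((3*m+2 : ℤ) : ℝ) / ((3*n+1 : ℤ) : ℝ) := by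
      rw [eq_div_iff hden]
      push_cast
      linear_combination 3*hm - 3*a*hn
    have h3z : (3 : ZMod 3) = 0 := by decide
    have hrs : ((3*m+2 : ℤ) : ZMod 3) = 2 * ((3*n+1 : ℤ) : ZMod 3) := by
      push_cast
      linear_combination ((m : ZMod 3) - 2*(n : ZMod 3)) * h3z
    have hs3 : ((3*n+1 : ℤ) : ZMod 3) ≠ 0 := by
      intro hcon
      have h1 : ((3*n+1 : ℤ) : ZMod 3) = 1 := by push_cast; linear_combination (n : ZMod 3) * h3z
      rw [hcon] at h1
      exact zero_ne_one h1
    exact exists_pq hsZ haeq hrs hs3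
  · obtain ⟨n, hn⟩ := exp_eq_om2 hz1
    obtain ⟨m, hm⟩ := exp_eq_om hw1
    have hsZ : (3*n+2 : ℤ) ≠ 0 := by omega
    have hden : ((3*n+2 : ℤ) : ℝ) ≠ 0 := by exact_mod_cast hsZ
    have haeq : a = ((3*m+1 : ℤ) : ℝ) / ((3*n+2 : ℤ) : ℝ) := by
      rw [eq_div_iff hden]
      push_cast
      linear_combination 3*hm - 3*a*hn
    have h3z : (3 : ZMod 3) = 0 := by decide
    have hrs : ((3*m+1 : ℤ) : ZMod 3) = 2 * ((3*n+2 : ℤ) : ZMod 3) := by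
      push_cast
      linear_combination ((m : ZMod 3) - 2*(n : ZMod 3) - 1) * h3z
    have hs3 : ((3*n+2 : ℤ) : ZMod 3) ≠ 0 := by
      intro hcon
      have h1 : ((3*n+2 : ℤ) : ZMod 3) = 2 := by push_cast; linear_combination (n : ZMod 3) * h3z
      rw [hcon] at h1
      exact absurd h1.symm (by decide)
    exact exists_pq hsZ haeq hrs hs3

lemma backward (ha0 : a ≠ 0) (ha1 : a ≠ 1) (p : ℤ) (q : ℕ) (hq : 1 ≤ q)
    (hcop : Nat.Coprime p.natAbs q) (hapq : a = (p : ℝ) / (q : ℝ))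
    (hdvd : (3 : ℤ) ∣ p + (q : ℤ)) : IsSpectralFinset ({0, 1, a} : Finset ℝ) := by
  classical
  -- arithmetic preliminaries
  have h3q : ¬ (3:ℤ) ∣ (q:ℤ) := by
    intro h
    have h3p : (3:ℤ) ∣ p := by
      have := dvd_sub hdvd h
      simpa using this
    have h1 : (3:ℕ) ∣ p.natAbs := by
      rw [← Int.natAbs_natCast 3, Int.natAbs_dvd_natAbs]
      exact_mod_cast h3p
    have h2 : (3:ℕ) ∣ q := by exact_mod_cast h
    have h5 : (3:ℕ) ∣ 1 := hcop ▸ Nat.dvd_gcd h1 h2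
    norm_num at h5
  have hqmod : (q:ℤ) % 3 = 1 ∨ (q:ℤ) % 3 = 2 := by omega
  obtain ⟨s, hs⟩ : ∃ s : ℤ, (q:ℤ)^2 = 3*s+1 := by
    rcases hqmod with h | h
    · obtain ⟨u, hu⟩ : ∃ u, (q:ℤ) = 3*u+1 := ⟨(q:ℤ)/3, by omega⟩
      exact ⟨3*u^2+2*u, by rw [hu]; ring⟩
    · obtain ⟨u, hu⟩ : ∃ u, (q:ℤ) = 3*u+2 := ⟨(q:ℤ)/3, by omega⟩
      exact ⟨3*u^2+4*u+1, by rw [hu]; ring⟩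
  obtain ⟨v, hv⟩ := hdvd
  obtain ⟨t, ht⟩ : ∃ t : ℤ, p * (q:ℤ) = 3*t + 2 :=
    ⟨v*(q:ℤ) - s - 1, by linear_combination (q:ℤ)*hv - hs⟩
  have hq0R : (q:ℝ) ≠ 0 := by
    have : (0:ℝ) < q := by exact_mod_cast hq
    linarith
  set θ : ℝ := (q:ℝ)^2/3 with hθdef
  have hθpos : 0 < θ := by
    rw [hθdef]
    have : (0:ℝ) < q := by exact_mod_cast hq
    positivity
  -- exponential values
  have hE1 : ∀ m : ℤ, Complex.exp (2*π*Complex.I*((((m:ℝ)*θ : ℝ)):ℂ)) = om^m := by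
    intro m
    have hsC : (((q:ℕ):ℝ):ℂ)^2 = 3*((s:ℤ):ℂ)+1 := by exact_mod_cast hs
    have harg : (2*(π:ℂ)*Complex.I*((((m:ℝ)*θ : ℝ)):ℂ))
        = ((m*s : ℤ):ℂ)*(2*π*Complex.I) + ((m:ℤ):ℂ)*(2*π*Complex.I/3) := by
      rw [hθdef]
      push_cast
      push_cast at hsC
      linear_combination (2*(π:ℂ)*Complex.I*((m:ℤ):ℂ)/3) * hsC
    rw [harg, Complex.exp_add, Complex.exp_int_mul, Complex.exp_int_mul,
      Complex.exp_two_pi_mul_I, one_zpow, one_mul]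
    rfl
  have hE2 : ∀ m : ℤ, Complex.exp (2*π*Complex.I*(((((m:ℝ)*θ)*a : ℝ)):ℂ)) = om^(2*m) := by
    intro m
    have htR : (p:ℝ)*(q:ℝ) = 3*(t:ℝ)+2 := by exact_mod_cast ht
    have hreal : (((m:ℝ)*θ)*a : ℝ) = ((m*t : ℤ):ℝ) + ((2*m : ℤ):ℝ)/3 := by
      rw [hθdef, hapq,
        show ((m:ℝ)*((q:ℝ)^2/3))*((p:ℝ)/(q:ℝ)) = (m:ℝ)*((p:ℝ)*(q:ℝ))/3 by
          field_simp,
        htR]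
      push_cast
      ring
    have harg : (2*(π:ℂ)*Complex.I*(((((m:ℝ)*θ)*a : ℝ)):ℂ))
        = ((m*t : ℤ):ℂ)*(2*π*Complex.I) + ((2*m:ℤ):ℂ)*(2*π*Complex.I/3) := by
      rw [hreal]; push_cast; ring
    rw [harg, Complex.exp_add, Complex.exp_int_mul, Complex.exp_int_mul,
      Complex.exp_two_pi_mul_I, one_zpow, one_mul]
    rfl
  -- the spectrum
  set Λ : Set ℝ := {0, θ, 2*θ} with hΛ
  have mem0 : (0:ℝ) ∈ Λ := by rw [hΛ]; left; rfl
  have mem1 : θ ∈ Λ := by rw [hΛ]; right; left; rfl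
  have mem2 : 2*θ ∈ Λ := by rw [hΛ]; right; right; rfl
  have hrep : ∀ l : Λ, ∃ j : ℤ, 0 ≤ j ∧ j < 3 ∧ (l:ℝ) = (j:ℝ)*θ := by
    rintro ⟨l, hl⟩
    rw [hΛ] at hl
    rcases hl with rfl | rfl | rfl
    · exact ⟨0, by norm_num, by norm_num, by norm_num⟩
    · exact ⟨1, by norm_num, by norm_num, by norm_num⟩
    · exact ⟨2, by norm_num, by norm_num, by push_cast; ring⟩
  set E : Λ → Lp ℂ 2 (unifMeasure ({0,1,a} : Finset ℝ)) :=
    fun l => (memLp_exp ha0 ha1 (l:ℝ)).toLp _ with hE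
  have hinner : ∀ (i j : Λ) (mi mj : ℤ), (i:ℝ) = (mi:ℝ)*θ → (j:ℝ) = (mj:ℝ)*θ →
      (inner ℂ (E i) (E j) : ℂ) = (1 + om^(mj - mi) + om^(2*(mj - mi)))/3 := by
    intro i j mi mj hi hj
    simp only [hE]
    rw [inner_toLp_exp ha0 ha1]
    rw [show (((j:ℝ):ℂ) - ((i:ℝ):ℂ)) = (((((mj - mi : ℤ):ℝ)*θ : ℝ)):ℂ) by
        rw [hi, hj]; push_cast; ring,
      show ((((((mj - mi : ℤ):ℝ)*θ : ℝ)):ℂ)) * ((a:ℝ):ℂ)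
          = (((((mj - mi : ℤ):ℝ)*θ)*a : ℝ):ℂ) by push_cast; ring]
    rw [hE1 (mj - mi), hE2 (mj - mi)]
  have hon : Orthonormal ℂ E := by
    rw [orthonormal_iff_ite]
    intro i j
    obtain ⟨mi, hmi0, hmi3, hi⟩ := hrep i
    obtain ⟨mj, hmj0, hmj3, hj⟩ := hrep j
    rw [hinner i j mi mj hi hj]
    by_cases hij : i = j
    · rw [if_pos hij]
      subst hij
      have hmm : (mi:ℝ)*θ = (mj:ℝ)*θ := by rw [← hi, ← hj]
      have : mi = mj := by
        have := mul_right_cancel₀ hθpos.ne' hmm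
        exact_mod_cast this
      subst this
      simp
      norm_num
    · rw [if_neg hij]
      have hne : mi ≠ mj := by
        intro hcon
        exact hij (Subtype.ext (by rw [hi, hj, hcon]))
      set d : ℤ := mj - mi with hd
      have hdmod : d % 3 = 1 ∨ d % 3 = 2 := by omega
      have h2 : om^(2*d) = (om^d)^(2:ℕ) := by
        rw [mul_comm, zpow_mul, show ((2:ℤ)) = ((2:ℕ):ℤ) from rfl, zpow_natCast]
      have h1 : om^d = om ∨ om^d = om^(2:ℕ) := by
        rw [om_zpow_eq]
        rcases hdmod with h | h
        · left; rw [h, zpow_one]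
        · right; rw [h, show ((2:ℤ)) = ((2:ℕ):ℤ) from rfl, zpow_natCast]
      rw [div_eq_zero_iff]
      left
      rcases h1 with h' | h'
      · rw [h2, h']; exact om_sum
      · rw [h2, h']
        have h4 : ((om^(2:ℕ) : ℂ))^(2:ℕ) = om := by linear_combination om*om_pow_three
        rw [h4]
        linear_combination om_sum
  have hdense : ⊤ ≤ (Submodule.span ℂ (Set.range E)).topologicalClosure := by
    have hspan : ∀ F : Lp ℂ 2 (unifMeasure ({0,1,a} : Finset ℝ)),
        F ∈ Submodule.span ℂ (Set.range E) := by
      intro F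
      set w0 : ℂ := (F : ℝ → ℂ) 0 with hw0
      set w1 : ℂ := (F : ℝ → ℂ) 1 with hw1
      set w2 : ℂ := (F : ℝ → ℂ) a with hw2
      set c0 : ℂ := (w0 + w1 + w2)/3 with hc0
      set c1 : ℂ := (w0 + om^2*w1 + om*w2)/3 with hc1
      set c2 : ℂ := (w0 + om*w1 + om^2*w2)/3 with hc2
      set l0 : Λ := ⟨0, mem0⟩ with hl0
      set l1 : Λ := ⟨θ, mem1⟩ with hl1
      set l2 : Λ := ⟨2*θ, mem2⟩ with hl2
      set G := c0 • E l0 + c1 • E l1 + c2 • E l2 with hG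
      -- values of the exponentials
      have f00 : Complex.exp (2*π*Complex.I*(((0:ℝ)):ℂ)*(((0:ℝ)):ℂ)) = 1 := by simp
      have hFG : F = G := by
        have hGae : (G : ℝ → ℂ) =ᵐ[unifMeasure ({0,1,a} : Finset ℝ)]
            fun x => c0 * Complex.exp (2*π*Complex.I*(((0:ℝ)):ℂ)*(x:ℂ))
              + c1 * Complex.exp (2*π*Complex.I*((θ:ℝ):ℂ)*(x:ℂ))
              + c2 * Complex.exp (2*π*Complex.I*((2*θ:ℝ):ℂ)*(x:ℂ)) := by
          have k1 := MeasureTheory.Lp.coeFn_add (c0 • E l0 + c1 • E l1) (c2 • E l2)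
          have k2 := MeasureTheory.Lp.coeFn_add (c0 • E l0) (c1 • E l1)
          have k3 := MeasureTheory.Lp.coeFn_smul c0 (E l0)
          have k4 := MeasureTheory.Lp.coeFn_smul c1 (E l1)
          have k5 := MeasureTheory.Lp.coeFn_smul c2 (E l2)
          have k6 := (memLp_exp ha0 ha1 ((l0:ℝ))).coeFn_toLp
          have k7 := (memLp_exp ha0 ha1 ((l1:ℝ))).coeFn_toLp
          have k8 := (memLp_exp ha0 ha1 ((l2:ℝ))).coeFn_toLp
          filter_upwards [k1, k2, k3, k4, k5, k6, k7, k8] with x h1 h2 h3 h4 h5 h6 h7 h8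
          rw [hG]
          simp only [Pi.add_apply, Pi.smul_apply, smul_eq_mul] at h1 h2 h3 h4 h5
          rw [h1, h2, h3, h4, h5]
          simp only [hE]
          rw [h6, h7, h8]
        obtain ⟨e0, e1, e2⟩ := (ae_iff_mu ha0 ha1).1 hGae
        refine (eq_Lp_iff ha0 ha1 F G).2 ⟨?_, ?_, ?_⟩
        · rw [e0]
          simp only [Complex.ofReal_zero, mul_zero, zero_mul, Complex.exp_zero, mul_one]
          rw [hc0, hc1, hc2, ← hw0]
          linear_combination (-(w1+w2)/3) * om_sum
        · rw [e1]
          dsimp only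
          rw [show (2*(π:ℂ)*Complex.I*(((0:ℝ)):ℂ)*(((1:ℝ)):ℂ)) = 0 by push_cast; ring,
            show (2*(π:ℂ)*Complex.I*((θ:ℝ):ℂ)*(((1:ℝ)):ℂ))
              = 2*π*Complex.I*((((1:ℤ):ℝ)*θ : ℝ):ℂ) by push_cast; ring,
            show (2*(π:ℂ)*Complex.I*((2*θ:ℝ):ℂ)*(((1:ℝ)):ℂ))
              = 2*π*Complex.I*((((2:ℤ):ℝ)*θ : ℝ):ℂ) by push_cast; ring,
            Complex.exp_zero, hE1 1, hE1 2]
          rw [hc0, hc1, hc2, ← hw1]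
          rw [show (om^(1:ℤ)) = om from zpow_one om,
            show (om^(2:ℤ)) = om^(2:ℕ) by rw [show ((2:ℤ)) = ((2:ℕ):ℤ) from rfl, zpow_natCast]]
          linear_combination (-(w0+w2)/3)*om_sum + (-(2*w1+w2*om)/3)*om_pow_three
        · rw [e2]
          dsimp only
          rw [show (2*(π:ℂ)*Complex.I*(((0:ℝ)):ℂ)*((a:ℝ):ℂ)) = 0 by push_cast; ring,
            show (2*(π:ℂ)*Complex.I*((θ:ℝ):ℂ)*((a:ℝ):ℂ))
              = 2*π*Complex.I*(((((1:ℤ):ℝ)*θ)*a : ℝ):ℂ) by push_cast; ring,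
            show (2*(π:ℂ)*Complex.I*((2*θ:ℝ):ℂ)*((a:ℝ):ℂ))
              = 2*π*Complex.I*(((((2:ℤ):ℝ)*θ)*a : ℝ):ℂ) by push_cast; ring,
            Complex.exp_zero, hE2 1, hE2 2]
          rw [hc0, hc1, hc2, ← hw2]
          rw [show (om^(2*(1:ℤ))) = om^(2:ℕ) by
              rw [show (2*(1:ℤ)) = ((2:ℕ):ℤ) by norm_num, zpow_natCast],
            show (om^(2*(2:ℤ))) = (om^(2:ℕ))^(2:ℕ) by
              rw [show (2*(2:ℤ)) = ((2:ℕ):ℤ)*((2:ℕ):ℤ) by norm_num, zpow_mul,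
                zpow_natCast, zpow_natCast]]
          have h4 : ((om^(2:ℕ) : ℂ))^(2:ℕ) = om := by linear_combination om*om_pow_three
          rw [h4]
          linear_combination (-(w0+w1)/3)*om_sum + (-(w1*om + 2*w2)/3)*om_pow_three
      rw [hFG, hG]
      refine Submodule.add_mem _ (Submodule.add_mem _ ?_ ?_) ?_ <;>
        exact Submodule.smul_mem _ _ (Submodule.subset_span ⟨_, rfl⟩)
    intro F _
    exact Submodule.le_topologicalClosure _ (hspan F)
  refine ⟨Λ, HilbertBasis.mk hon hdense, fun l => ?_⟩
  have hbl : (HilbertBasis.mk hon hdense) l = E l := by rw [HilbertBasis.coe_mk]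
  rw [hbl]
  simp only [hE]
  exact (memLp_exp ha0 ha1 (l:ℝ)).coeFn_toLp

end SpecAux

/-- Let `a ∈ ℝ` with `a ≠ 0` and `a ≠ 1`.  The three-element set `A = {0, 1, a}` is spectral
if and only if `a` is rational and, writing `a = p/q` in reduced form, `3 ∣ p + q`. -/
theorem isSpectral_zero_one_iff (a : ℝ) (ha0 : a ≠ 0) (ha1 : a ≠ 1) :
    IsSpectralFinset ({0, 1, a} : Finset ℝ) ↔
      ∃ (p : ℤ) (q : ℕ), 1 ≤ q ∧ Nat.Coprime p.natAbs q ∧ a = (p : ℝ) / (q : ℝ) ∧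
        (3 : ℤ) ∣ p + (q : ℤ) := by
  constructor
  · exact SpecAux.forward ha0 ha1
  · rintro ⟨p, q, h1, h2, h3, h4⟩
    exact SpecAux.backward ha0 ha1 p q h1 h2 h3 h4
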